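/- If k = m·n for positive integers m, n with m ≥ 3, then emb_k(H) ≥ emb_m(H), where emb_j(H) = j / wed(C_j ↦ H). -/

import Mathlib

open Finset

structure Hypergraph' (V : Type*) [DecidableEq V] [Fintype V] where
  edges : Finset (Finset V)

namespace Hypergraph'

variable {V : Type*} [DecidableEq V] [Fintype V]

/-- Two vertex sets touch in `H`: they intersect, or some hyperedge meets both. -/
def touch (H : Hypergraph' V) (S T : Finset V) : Prop :=
  (S ∩ T).Nonempty ∨ ∃ e ∈ H.edges, (e ∩ S).Nonempty ∧ (e ∩ T).Nonempty

/-- `S` induces a connected subhypergraph of `H`. -/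
def connSet (H : Hypergraph' V) (S : Finset V) : Prop :=
  ∀ a ∈ S, ∀ b ∈ S,
    Relation.ReflTransGen (fun x y => x ∈ S ∧ y ∈ S ∧ ∃ e ∈ H.edges, x ∈ e ∧ y ∈ e) a b

/-- An embedding of the `k`-clique into the hypergraph `H`. -/
def IsCliqueEmb (H : Hypergraph' V) (k : ℕ) (ψ : Fin k → Finset V) : Prop :=
  (∀ i, (ψ i).Nonempty) ∧ (∀ i, H.connSet (ψ i)) ∧
    ∀ i j : Fin k, i ≠ j → H.touch (ψ i) (ψ j)

/-- The weak edge depth of an embedding: the max over hyperedges `e` of the number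
of clique vertices whose image meets `e`. -/
def wedOf (H : Hypergraph' V) {k : ℕ} (ψ : Fin k → Finset V) : ℕ :=
  H.edges.sup fun e => (Finset.univ.filter fun i : Fin k => ((ψ i) ∩ e).Nonempty).card

/-- `wed (C_k ↦ H)`: the minimum weak edge depth over embeddings of the `k`-clique. -/
noncomputable def wed (H : Hypergraph' V) (k : ℕ) : ℕ :=
  sInf {w | ∃ ψ : Fin k → Finset V, H.IsCliqueEmb k ψ ∧ H.wedOf ψ ≤ w}

end Hypergraph'

/-- If `k = m * n` with `m ≥ 3`, `n ≥ 1`, then `emb_k(H) ≥ emb_m(H)`, where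
`emb_j(H) = j / wed(C_j ↦ H)`. -/
theorem emb_mul_ge {V : Type*} [DecidableEq V] [Fintype V] [Nonempty V]
    (H : Hypergraph' V) (hconn : H.connSet Finset.univ) (m n k : ℕ)
    (hm : 3 ≤ m) (hn : 1 ≤ n) (hk : k = m * n) :
    (m : ℚ) / (H.wed m : ℚ) ≤ (k : ℚ) / (H.wed k : ℚ) := by
  have hn0 : 0 < n := hn
  have hm0 : 0 < m := by omega
  have hk0 : 0 < k := by rw [hk]; positivity
  have hmk : m ≤ k := by rw [hk]; nlinarith
  -- the defining sets are nonempty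
  have hset : ∀ j : ℕ, {w | ∃ ψ : Fin j → Finset V, H.IsCliqueEmb j ψ ∧ H.wedOf ψ ≤ w}.Nonempty := by
    intro j
    refine ⟨H.wedOf (fun _ : Fin j => (Finset.univ : Finset V)),
      fun _ => Finset.univ, ⟨fun i => Finset.univ_nonempty, fun i => hconn, ?_⟩, le_rfl⟩
    intro i j' _
    exact Or.inl (by simp [Finset.univ_nonempty])
  -- optimal embedding for m
  obtain ⟨ψ, hψ, hwψ⟩ := Nat.sInf_mem (hset m)
  -- optimal embedding for k
  obtain ⟨φ, hφ, hwφ⟩ := Nat.sInf_mem (hset k)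
  obtain ⟨hψne, hψconn, hψtouch⟩ := hψ
  obtain ⟨hφne, hφconn, hφtouch⟩ := hφ
  -- wed m ≤ wed k  (restriction of φ)
  have h1 : H.wed m ≤ H.wed k := by
    apply Nat.sInf_le
    refine ⟨fun i => φ (Fin.castLE hmk i), ⟨fun i => hφne _, fun i => hφconn _, ?_⟩, ?_⟩
    · intro i j hij
      exact hφtouch _ _ (fun h => hij (Fin.castLE_injective hmk h))
    · refine le_trans ?_ hwφ
      apply Finset.sup_le
      intro e he
      refine le_trans ?_ (Finset.le_sup he)
      apply Finset.card_le_card_of_injOn (fun i => Fin.castLE hmk i)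
      · intro i hi
        simp only [Finset.mem_coe, Finset.mem_filter, Finset.mem_univ, true_and] at hi ⊢
        exact hi
      · intro a _ b _ h
        exact Fin.castLE_injective hmk h
  -- wed k ≤ n * wed m  (bundling)
  have hbv : ∀ i : Fin k, (i : ℕ) / n < m := by
    intro i
    have hlt : (i : ℕ) < n * m := by rw [Nat.mul_comm, ← hk]; exact i.2
    exact Nat.div_lt_of_lt_mul hlt
  have h2 : H.wed k ≤ n * H.wed m := by
    apply Nat.sInf_le
    set b : Fin k → Fin m := fun i => ⟨(i : ℕ) / n, hbv i⟩ with hb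
    refine ⟨fun i => ψ (b i), ⟨fun i => hψne _, fun i => hψconn _, ?_⟩, ?_⟩
    · intro i j hij
      by_cases hbij : b i = b j
      · refine Or.inl ?_
        show (ψ (b i) ∩ ψ (b j)).Nonempty
        rw [hbij, Finset.inter_self]
        exact hψne _
      · exact hψtouch _ _ hbij
    · calc H.wedOf (fun i => ψ (b i)) ≤ n * H.wedOf ψ := by
            apply Finset.sup_le
            intro e he
            have hle : (Finset.univ.filter fun i : Fin k => (ψ (b i) ∩ e).Nonempty).card
                ≤ n * (Finset.univ.filter fun i : Fin m => (ψ i ∩ e).Nonempty).card := by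
              classical
              have hinj := Finset.card_le_card_of_injOn
                (f := fun i : Fin k => (b i, (⟨(i : ℕ) % n, Nat.mod_lt _ hn0⟩ : Fin n)))
                (s := Finset.univ.filter fun i : Fin k => (ψ (b i) ∩ e).Nonempty)
                (t := (Finset.univ.filter fun i : Fin m => (ψ i ∩ e).Nonempty) ×ˢ Finset.univ)
                ?_ ?_
              · refine hinj.trans ?_
                rw [Finset.card_product]
                simp [mul_comm]
              · intro i hi
                simp only [Finset.mem_coe, Finset.mem_filter, Finset.mem_univ, true_and,
                  Finset.mem_product] at hi ⊢
                exact ⟨hi, trivial⟩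
              · intro a _ c _ h
                have h1' : (a : ℕ) / n = (c : ℕ) / n := by
                  have := congrArg (fun p : Fin m × Fin n => (p.1 : ℕ)) h
                  simpa [hb] using this
                have h2' : (a : ℕ) % n = (c : ℕ) % n := by
                  have := congrArg (fun p : Fin m × Fin n => (p.2 : ℕ)) h
                  simpa using this
                have : (a : ℕ) = (c : ℕ) := by
                  conv_lhs => rw [← Nat.div_add_mod (a : ℕ) n]
                  conv_rhs => rw [← Nat.div_add_mod (c : ℕ) n]
                  rw [h1', h2']
                exact Fin.ext this
            have hsup : (Finset.univ.filter fun i : Fin m => (ψ i ∩ e).Nonempty).card ≤ H.wedOf ψ :=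
              Finset.le_sup (f := fun e => (Finset.univ.filter fun i : Fin m => ((ψ i) ∩ e).Nonempty).card) he
            exact hle.trans (Nat.mul_le_mul_left n hsup)
        _ ≤ n * H.wed m := Nat.mul_le_mul_left n hwψ
  -- conclude
  rcases Nat.eq_zero_or_pos (H.wed m) with h0 | hpos
  · rw [h0]
    simp
    positivity
  · have hkpos : 0 < H.wed k := lt_of_lt_of_le hpos h1
    rw [div_le_div_iff₀ (by exact_mod_cast hpos) (by exact_mod_cast hkpos)]
    have heq : (m : ℚ) * (n * H.wed m) = k * H.wed m := by
      rw [hk]; push_cast; ring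
    calc (m : ℚ) * H.wed k ≤ (m : ℚ) * (n * H.wed m) := by
          have h2' : (H.wed k : ℚ) ≤ n * H.wed m := by exact_mod_cast h2
          nlinarith [show (0:ℚ) ≤ (m:ℚ) by positivity]
      _ = k * H.wed m := heq
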